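/- Let S be a finite set of nonempty words over Σ, each of length at most n, such that S* is co-finite. Then the length of the longest word not in S* is strictly less than q = (2/(2|Σ|−1))·(2^n |Σ|^n − 1), and consequently the number of words in Σ* \ S* is at most (|Σ|^q − 1)/(|Σ| − 1). -/

import Mathlib

open Computability


variable {α : Type} 

lemma mem_kstar_of_mem {S : Language α} {x : List α} (h : x ∈ S) : x ∈ S∗ := by
  rw [Language.mem_kstar]
  exact ⟨[x], by simp, by simpa using h⟩

lemma append_mem_kstar {S : Language α} {x y : List α} (hx : x ∈ S∗) (hy : y ∈ S∗) :
    x ++ y ∈ S∗ := by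
  rw [Language.mem_kstar] at hx hy ⊢
  obtain ⟨L1, rfl, h1⟩ := hx
  obtain ⟨L2, rfl, h2⟩ := hy
  refine ⟨L1 ++ L2, by simp, fun z hz => ?_⟩
  rcases List.mem_append.1 hz with h | h
  · exact h1 z h
  · exact h2 z h

/-- Decomposition lemma: a crossing split. -/
lemma exists_split_aux {S : Language α} {n : ℕ} (hSn : ∀ w ∈ S, w.length ≤ n) :
    ∀ (L : List (List α)) (u v : List α), v ≠ [] → u ++ v = L.flatten →
      (∀ b ∈ L, b ∈ S) →
      ∃ p s : List α, u = p ++ s ∧ s.length ≤ n - 1 ∧ p ∈ S∗ ∧ s ++ v ∈ S∗ := by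
  intro L
  induction L with
  | nil =>
    intro u v hv h _
    simp at h
    exact absurd h.2 hv
  | cons b L ih =>
    intro u v hv h hb
    rcases lt_or_ge u.length b.length with hlt | hle
    · refine ⟨[], u, by simp, ?_, Language.nil_mem_kstar S, ?_⟩
      · have := hSn b (hb b (by simp))
        omega
      · rw [h]
        exact Language.join_mem_kstar (fun y hy => hb y hy)
    · -- b is a prefix of u
      have hb' : b = u.take b.length := by
        have : (u ++ v).take b.length = b := by
          rw [h]; simp [List.flatten_cons]
        rw [List.take_append_of_le_length hle] at this
        exact this.symm
      have hdrop : u.drop b.length ++ v = L.flatten := by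
        have : (u ++ v).drop b.length = L.flatten := by
          rw [h]; simp [List.flatten_cons]
        rwa [List.drop_append_of_le_length hle] at this
      obtain ⟨p, s, hps, hslen, hpS, hsv⟩ := ih (u.drop b.length) v hv hdrop
        (fun y hy => hb y (by simp [hy]))
      refine ⟨b ++ p, s, ?_, hslen, append_mem_kstar (mem_kstar_of_mem (hb b (by simp))) hpS, hsv⟩
      conv_lhs => rw [← List.take_append_drop b.length u]
      rw [List.append_assoc, ← hps, ← hb']

lemma exists_split {S : Language α} {n : ℕ} (hSn : ∀ w ∈ S, w.length ≤ n)
    {u v : List α} (hv : v ≠ []) (h : u ++ v ∈ S∗) :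
    ∃ l ≤ min (n - 1) u.length, u.take (u.length - l) ∈ S∗ ∧ u.drop (u.length - l) ++ v ∈ S∗ := by
  rw [Language.mem_kstar] at h
  obtain ⟨L, hL, hLS⟩ := h
  obtain ⟨p, s, hps, hslen, hpS, hsv⟩ := exists_split_aux hSn L u v hv hL hLS
  refine ⟨s.length, ?_, ?_, ?_⟩
  · have : s.length ≤ u.length := by rw [hps]; simp
    omega
  · have : u.take (u.length - s.length) = p := by
      rw [hps]; simp [List.take_append_of_le_length]
    rwa [this]
  · have : u.drop (u.length - s.length) = s := by
      rw [hps]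
      have : p.length = (p ++ s).length - s.length := by simp
      rw [← this]
      simp
    rwa [this]

open Classical in
noncomputable def stateOf (S : Language α) (n : ℕ) (u : List α) : List α × Finset ℕ :=
  (u.drop (u.length - (n-1)),
   (Finset.range (min (n-1) u.length + 1)).filter (fun l => u.take (u.length - l) ∈ S∗))

lemma state_ext {S : Language α} {n : ℕ} (hSn : ∀ w ∈ S, w.length ≤ n) :
    ∀ {u u' : List α}, stateOf S n u = stateOf S n u' → ∀ v, u ++ v ∈ S∗ → u' ++ v ∈ S∗ := by
  classical
  intro u u' h v hv
  have ht : u.drop (u.length - (n-1)) = u'.drop (u'.length - (n-1)) := congrArg Prod.fst h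
  have hL := congrArg Prod.snd h
  simp only [stateOf] at ht hL
  have hk : min (n-1) u.length = min (n-1) u'.length := by
    have e1 := congrArg List.length ht
    simp only [List.length_drop] at e1
    omega
  rcases eq_or_ne v [] with rfl | hne
  · simp only [List.append_nil] at hv ⊢
    have h0 : (0:ℕ) ∈ (Finset.range (min (n-1) u.length + 1)).filter
        (fun l => u.take (u.length - l) ∈ S∗) := by
      refine Finset.mem_filter.2 ⟨Finset.mem_range.2 (by omega), ?_⟩
      simpa using hv
    rw [hL] at h0
    have := (Finset.mem_filter.1 h0).2
    simpa using this
  · obtain ⟨l, hl, hp, hs⟩ := exists_split hSn hne hv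
    have hmem : l ∈ (Finset.range (min (n-1) u.length + 1)).filter
        (fun l => u.take (u.length - l) ∈ S∗) :=
      Finset.mem_filter.2 ⟨Finset.mem_range.2 (by omega), hp⟩
    rw [hL] at hmem
    obtain ⟨hlr, hp'⟩ := Finset.mem_filter.1 hmem
    rw [Finset.mem_range] at hlr
    have e1 : u.drop (u.length - l) = (u.drop (u.length - (n-1))).drop (min (n-1) u.length - l) := by
      rw [List.drop_drop]; congr 1; omega
    have e2 : u'.drop (u'.length - l) =
        (u'.drop (u'.length - (n-1))).drop (min (n-1) u'.length - l) := by
      rw [List.drop_drop]; congr 1; omega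
    have hdd : u'.drop (u'.length - l) = u.drop (u.length - l) := by
      rw [e2, ← ht, ← hk, ← e1]
    have : u' ++ v = u'.take (u'.length - l) ++ (u'.drop (u'.length - l) ++ v) := by
      rw [← List.append_assoc, List.take_append_drop]
    rw [this, hdd]
    exact append_mem_kstar hp' hs

lemma pump {S : Language α} (hcof : ((S∗ : Language α)ᶜ).Finite) {u y v : List α}
    (hy : y ≠ []) (hrev : ∀ z, (u ++ y) ++ z ∈ S∗ → u ++ z ∈ S∗)
    (hnot : (u ++ y) ++ v ∉ S∗) : False := by
  have hylen : 0 < y.length := List.length_pos_iff.2 hy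
  set g : ℕ → List α := fun k => (List.replicate k y).flatten ++ v with hg
  have hstep : ∀ k, g (k+1) = y ++ g k := by
    intro k; simp [hg, List.replicate_succ, List.append_assoc]
  have hg0 : g 0 = v := by simp [hg]
  have hclaim : ∀ k, u ++ g (k+1) ∉ S∗ := by
    intro k; induction k with
    | zero =>
      intro hc
      rw [hstep 0, hg0, ← List.append_assoc] at hc
      exact hnot hc
    | succ k ih =>
      intro hc
      rw [hstep (k+1), ← List.append_assoc] at hc
      exact ih (hrev _ hc)
  have hinj : Function.Injective (fun k : ℕ => u ++ g (k+1)) := by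
    intro a b hab
    have := congrArg List.length hab
    simp only [hg, List.length_append, List.length_flatten, List.map_replicate,
      List.sum_replicate, smul_eq_mul] at this
    have h2 : (a+1) * y.length = (b+1) * y.length := by omega
    have := Nat.eq_of_mul_eq_mul_right hylen h2
    omega
  exact Set.infinite_of_injective_forall_mem hinj (fun k => hclaim k) hcof

open Classical in
noncomputable def wordsOfLen (α : Type) [Fintype α] (j : ℕ) : Finset (List α) :=
  Finset.univ.image (fun x : Fin j → α => List.ofFn x)

lemma mem_wordsOfLen {α : Type} [Fintype α] {j : ℕ} {w : List α} :
    w ∈ wordsOfLen α j ↔ w.length = j := by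
  classical
  unfold wordsOfLen
  constructor
  · intro h
    obtain ⟨x, _, rfl⟩ := Finset.mem_image.1 h
    simp
  · intro h
    subst h
    exact Finset.mem_image.2 ⟨fun i : Fin w.length => w[(i : ℕ)], Finset.mem_univ _, List.ofFn_getElem⟩

lemma card_wordsOfLen (α : Type) [Fintype α] (j : ℕ) :
    (wordsOfLen α j).card = Fintype.card α ^ j := by
  classical
  rw [wordsOfLen, Finset.card_image_of_injective _ List.ofFn_injective]
  simp

lemma geom_mul (c k : ℕ) (hc : 1 ≤ c) :
    (∑ j ∈ Finset.range k, c ^ j) * (c - 1) = c ^ k - 1 := by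
  induction k with
  | zero => simp
  | succ k ih =>
    rw [Finset.sum_range_succ, add_mul, ih, pow_succ, Nat.mul_sub_one]
    have h1 : 1 ≤ c ^ k := Nat.one_le_pow _ _ hc
    have h2 : c ^ k ≤ c ^ k * c := Nat.le_mul_of_pos_right _ hc
    omega

lemma wordsOfLen_disj (α : Type) [Fintype α] (k : ℕ) :
    (↑(Finset.range k) : Set ℕ).PairwiseDisjoint (wordsOfLen α) := by
  intro i _ j _ hij
  refine Finset.disjoint_left.2 fun w hwi hwj => ?_
  exact hij ((mem_wordsOfLen.1 hwi).symm.trans (mem_wordsOfLen.1 hwj))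

open Classical in
noncomputable def statesT (α : Type) [Fintype α] (n : ℕ) : Finset (List α × Finset ℕ) :=
  ((Finset.range n).biUnion (wordsOfLen α)).biUnion
    (fun t => (Finset.range (t.length + 1)).powerset.image (fun L => (t, L)))

lemma card_statesT (α : Type) [Fintype α] (n : ℕ) :
    (statesT α n).card ≤ ∑ j ∈ Finset.range n, 2 * (2 * Fintype.card α) ^ j := by
  classical
  refine le_trans Finset.card_biUnion_le ?_
  calc
    ∑ t ∈ (Finset.range n).biUnion (wordsOfLen α),
        ((Finset.range (t.length + 1)).powerset.image (fun L => (t, L))).card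
      ≤ ∑ t ∈ (Finset.range n).biUnion (wordsOfLen α), 2 ^ (t.length + 1) := by
        refine Finset.sum_le_sum fun t _ => ?_
        refine le_trans Finset.card_image_le ?_
        rw [Finset.card_powerset, Finset.card_range]
    _ = ∑ j ∈ Finset.range n, ∑ t ∈ wordsOfLen α j, 2 ^ (t.length + 1) :=
        Finset.sum_biUnion (wordsOfLen_disj α n)
    _ = ∑ j ∈ Finset.range n, 2 * (2 * Fintype.card α) ^ j := by
        refine Finset.sum_congr rfl fun j _ => ?_
        rw [Finset.sum_congr rfl (fun t ht => by rw [mem_wordsOfLen.1 ht] :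
          ∀ t ∈ wordsOfLen α j, 2 ^ (t.length + 1) = 2 ^ (j + 1))]
        rw [Finset.sum_const, card_wordsOfLen, smul_eq_mul]
        ring

lemma stateOf_mem {α : Type} [Fintype α] (S : Language α) {n : ℕ} (hn : 1 ≤ n) (u : List α) :
    stateOf S n u ∈ statesT α n := by
  classical
  have hlen : (u.drop (u.length - (n-1))).length = min (n-1) u.length := by
    rw [List.length_drop]; omega
  refine Finset.mem_biUnion.2 ⟨u.drop (u.length - (n-1)), ?_, ?_⟩
  · refine Finset.mem_biUnion.2 ⟨(u.drop (u.length - (n-1))).length,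
      Finset.mem_range.2 ?_, mem_wordsOfLen.2 rfl⟩
    omega
  · refine Finset.mem_image.2 ⟨(stateOf S n u).2, Finset.mem_powerset.2 ?_, rfl⟩
    rw [stateOf, hlen]
    exact Finset.filter_subset _ _



/-- Let `S` be a finite set of nonempty words over `Σ` (with at least two
letters), each of length at most `n`, such that `S∗` is co-finite. Then every word not in
`S∗` has length `< q = (2/(2|Σ|−1))·(2^n·|Σ|^n − 1)`, and the number of words not in `S∗` is
at most `(|Σ|^q − 1)/(|Σ| − 1)`. -/
theorem omitted_words_bounds {α : Type} [Fintype α] (hcard : 2 ≤ Fintype.card α) (n : ℕ)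
    (S : Language α) (hfin : S.Finite)
    (hS : ∀ w ∈ S, w ≠ [] ∧ w.length ≤ n)
    (hcof : Set.Finite ((S∗ : Language α)ᶜ))
    (q : ℕ) (hq : q = 2 * (2 ^ n * Fintype.card α ^ n - 1) / (2 * Fintype.card α - 1)) :
    (∀ w : List α, w ∉ S∗ → w.length < q) ∧
    Set.ncard ((S∗ : Language α)ᶜ) ≤ (Fintype.card α ^ q - 1) / (Fintype.card α - 1) := by
  classical
  have hSn : ∀ w ∈ S, w.length ≤ n := fun w hw => (hS w hw).2
  -- n ≥ 1
  have hn : 1 ≤ n := by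
    by_contra hn
    have hn0 : n = 0 := by omega
    subst hn0
    have hnilS : ∀ x ∈ (S∗ : Language α), x = [] := by
      intro x hx
      obtain ⟨L, rfl, hL⟩ := Language.mem_kstar.1 hx
      cases L with
      | nil => rfl
      | cons b L =>
        have := hS b (hL b (by simp))
        have hb : b = [] := List.eq_nil_of_length_eq_zero (by omega)
        exact absurd hb this.1
    obtain ⟨a⟩ : Nonempty α := Fintype.card_pos_iff.1 (by omega)
    have hinj : Function.Injective (fun k : ℕ => List.replicate (k+1) a) := by
      intro i j hij
      have := congrArg List.length hij
      simpa using this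
    refine (Set.infinite_of_injective_forall_mem hinj (fun k => ?_)) hcof
    intro hk
    have := hnilS _ hk
    simp [List.replicate] at this
  -- q as a geometric sum
  have hgm := geom_mul (2 * Fintype.card α) n (by omega)
  have hq' : q = ∑ j ∈ Finset.range n, 2 * (2 * Fintype.card α) ^ j := by
    rw [hq, ← mul_pow, ← hgm, ← mul_assoc,
      Nat.mul_div_cancel _ (show 0 < 2 * Fintype.card α - 1 by omega), Finset.mul_sum]
  have hT : (statesT α n).card ≤ q := hq' ▸ card_statesT α n
  -- Part 1
  have part1 : ∀ w : List α, w ∉ S∗ → w.length < q := by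
    intro w hw
    by_contra hlen
    push_neg at hlen
    have main : ∀ i j : ℕ, i < j → j ≤ q →
        stateOf S n (w.take i) = stateOf S n (w.take j) → False := by
      intro i j hij hjq hst
      have hjw : j ≤ w.length := le_trans hjq hlen
      have huy : w.take i ++ (w.take j).drop i = w.take j := by
        conv_rhs => rw [← List.take_append_drop i (w.take j)]
        rw [List.take_take, min_eq_left hij.le]
      have hy : (w.take j).drop i ≠ [] := by
        refine List.ne_nil_of_length_pos ?_
        rw [List.length_drop, List.length_take]
        omega
      have hrev : ∀ z, (w.take i ++ (w.take j).drop i) ++ z ∈ S∗ → w.take i ++ z ∈ S∗ := by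
        intro z hz
        rw [huy] at hz
        exact state_ext hSn hst.symm z hz
      refine pump hcof (v := w.drop j) hy hrev ?_
      rw [huy]
      have : w.take j ++ w.drop j = w := List.take_append_drop j w
      rw [this]
      exact hw
    have hmaps : ∀ i ∈ Finset.range (q+1), stateOf S n (w.take i) ∈ statesT α n :=
      fun i _ => stateOf_mem S hn (w.take i)
    have hcardlt : (statesT α n).card < (Finset.range (q+1)).card := by
      rw [Finset.card_range]; omega
    obtain ⟨i, hi, j, hj, hij, hst⟩ :=
      Finset.exists_ne_map_eq_of_card_lt_of_maps_to hcardlt hmaps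
    rw [Finset.mem_range] at hi hj
    rcases lt_trichotomy i j with h | h | h
    · exact main i j h (by omega) hst
    · exact hij h
    · exact main j i h (by omega) hst.symm
  refine ⟨part1, ?_⟩
  -- Part 2
  set WQ := (Finset.range q).biUnion (wordsOfLen α) with hWQ
  have hsub : ((S∗ : Language α)ᶜ : Set (List α)) ⊆ ↑WQ := by
    intro w hw
    refine Finset.mem_coe.2 (Finset.mem_biUnion.2 ⟨w.length, Finset.mem_range.2 ?_,
      mem_wordsOfLen.2 rfl⟩)
    exact part1 w hw
  have hcount : Set.ncard ((S∗ : Language α)ᶜ) ≤ WQ.card := by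
    have := Set.ncard_le_ncard hsub (WQ.finite_toSet)
    rwa [Set.ncard_coe_finset] at this
  have hWQcard : WQ.card = ∑ j ∈ Finset.range q, Fintype.card α ^ j := by
    rw [hWQ, Finset.card_biUnion]
    · exact Finset.sum_congr rfl fun j _ => card_wordsOfLen α j
    · intro i hi j hj hij
      exact wordsOfLen_disj α q (Finset.mem_coe.2 hi) (Finset.mem_coe.2 hj) hij
  rw [← Nat.geomSum_eq hcard q, ← hWQcard]
  exact hcount
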